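/- In a 2-agent 2×2 general-sum game with u_r u_c = 0 (so the linearization matrix U is not invertible), if both agents follow GA-SPP with γ₀ and η satisfying Conditions 1–3, then from any initial strategy pair there exists a finite K such that (α_k,β_k) = (α_K,β_K) for all k ≥ K, and (α_K,β_K) is a Nash equilibrium. -/

import Mathlib

/- Framework for 2-agent 2×2 general-sum games with scalar strategies
   α, β ∈ [0,1] (the probability of the first action). -/

open Filter Topology

noncomputable section

/-- Projection of a real number onto [0, 1] (clamping). -/
def clamp (x : ℝ) : ℝ := max 0 (min 1 x)

/-- Row player's expected payoff. -/
def Vr2 (R : Matrix (Fin 2) (Fin 2) ℝ) (α β : ℝ) : ℝ :=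
  R 0 0 * (α * β) + R 0 1 * (α * (1 - β)) +
  R 1 0 * ((1 - α) * β) + R 1 1 * ((1 - α) * (1 - β))

/-- Column player's expected payoff. -/
def Vc2 (C : Matrix (Fin 2) (Fin 2) ℝ) (α β : ℝ) : ℝ :=
  C 0 0 * (α * β) + C 0 1 * (α * (1 - β)) +
  C 1 0 * ((1 - α) * β) + C 1 1 * ((1 - α) * (1 - β))

def ur2 (R : Matrix (Fin 2) (Fin 2) ℝ) : ℝ := R 0 0 + R 1 1 - R 0 1 - R 1 0
def br2 (R : Matrix (Fin 2) (Fin 2) ℝ) : ℝ := R 0 1 - R 1 1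
def uc2 (C : Matrix (Fin 2) (Fin 2) ℝ) : ℝ := C 0 0 + C 1 1 - C 0 1 - C 1 0
def bc2 (C : Matrix (Fin 2) (Fin 2) ℝ) : ℝ := C 1 0 - C 1 1

/-- ∂_α V_r(α, β) = u_r β + b_r. -/
def dVr2 (R : Matrix (Fin 2) (Fin 2) ℝ) (β : ℝ) : ℝ := ur2 R * β + br2 R

/-- ∂_β V_c(α, β) = u_c α + b_c. -/
def dVc2 (C : Matrix (Fin 2) (Fin 2) ℝ) (α : ℝ) : ℝ := uc2 C * α + bc2 C

/-- (α, β) is a Nash equilibrium of the 2×2 game. -/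
def IsNash2 (R C : Matrix (Fin 2) (Fin 2) ℝ) (α β : ℝ) : Prop :=
  α ∈ Set.Icc (0 : ℝ) 1 ∧ β ∈ Set.Icc (0 : ℝ) 1 ∧
  (∀ α' ∈ Set.Icc (0 : ℝ) 1, Vr2 R α' β ≤ Vr2 R α β) ∧
  (∀ β' ∈ Set.Icc (0 : ℝ) 1, Vc2 C α β' ≤ Vc2 C α β)

/-- δ = max entry − min entry of a 2×2 payoff matrix. -/
def spread2 (M : Matrix (Fin 2) (Fin 2) ℝ) : ℝ :=
  (Finset.univ.sup' Finset.univ_nonempty fun p : Fin 2 × Fin 2 => M p.1 p.2)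
  - (Finset.univ.inf' Finset.univ_nonempty fun p : Fin 2 × Fin 2 => M p.1 p.2)

/-- Conditions 1–3 on the initial prediction length γ₀ and the step size η. -/
def Conds2 (R C : Matrix (Fin 2) (Fin 2) ℝ) (γ₀ η : ℝ) : Prop :=
  0 < γ₀ ∧ 0 < η ∧
  4 * γ₀ ^ 2 * spread2 R * spread2 C < 1 ∧
  η < 1 / (spread2 R + spread2 C) ∧ γ₀ < 1 / (spread2 R + spread2 C)

/-- Both agents follow GA-SPP in the 2×2 game: `a`,`b` are the strategies,
`abar`,`bbar` the predictions, `γ` the prediction lengths, `η` the step size. -/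
def GASPP2Run (R C : Matrix (Fin 2) (Fin 2) ℝ) (η : ℝ)
    (γ a b abar bbar : ℕ → ℝ) : Prop :=
  ∀ k : ℕ,
    abar (k + 1) = clamp (a k + γ k * dVr2 R (b k)) ∧
    bbar (k + 1) = clamp (b k + γ k * dVc2 C (a k)) ∧
    ((abar (k + 1) = a k ∧ bbar (k + 1) = b k) →
        a (k + 1) = a k ∧ b (k + 1) = b k ∧ γ (k + 1) = γ k) ∧
    (¬(abar (k + 1) = a k ∧ bbar (k + 1) = b k) →
        a (k + 1) = clamp (a k + η * dVr2 R (bbar (k + 1))) ∧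
        b (k + 1) = clamp (b k + η * dVc2 C (abar (k + 1))) ∧
        ((a (k + 1) = a k ∧ b (k + 1) = b k) →
            ∃ μ : ℝ, 0 < μ ∧ μ < 1 ∧ γ (k + 1) = μ * γ k) ∧
        (¬(a (k + 1) = a k ∧ b (k + 1) = b k) → γ (k + 1) = γ k))

/-- The row agent follows GA-SPP while the column agent follows basic
gradient ascent (GA), based on the opponent's current strategy. -/
def GASPP2vsGARun (R C : Matrix (Fin 2) (Fin 2) ℝ) (η : ℝ)
    (γ a b abar bbar : ℕ → ℝ) : Prop :=
  ∀ k : ℕ,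
    abar (k + 1) = clamp (a k + γ k * dVr2 R (b k)) ∧
    bbar (k + 1) = clamp (b k + γ k * dVc2 C (a k)) ∧
    ((abar (k + 1) = a k ∧ bbar (k + 1) = b k) →
        a (k + 1) = a k ∧ b (k + 1) = b k ∧ γ (k + 1) = γ k) ∧
    (¬(abar (k + 1) = a k ∧ bbar (k + 1) = b k) →
        a (k + 1) = clamp (a k + η * dVr2 R (bbar (k + 1))) ∧
        b (k + 1) = clamp (b k + η * dVc2 C (a k)) ∧
        ((a (k + 1) = a k ∧ b (k + 1) = b k) →
            ∃ μ : ℝ, 0 < μ ∧ μ < 1 ∧ γ (k + 1) = μ * γ k) ∧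
        (¬(a (k + 1) = a k ∧ b (k + 1) = b k) → γ (k + 1) = γ k))

end

lemma clamp_mem (x : ℝ) : clamp x ∈ Set.Icc (0:ℝ) 1 :=
  ⟨le_max_left _ _, max_le zero_le_one (min_le_left _ _)⟩

lemma clamp_of_mem {x : ℝ} (hx : x ∈ Set.Icc (0:ℝ) 1) : clamp x = x := by
  unfold clamp; rw [min_eq_right hx.2, max_eq_right hx.1]

lemma clamp_one_sub (x : ℝ) : clamp (1 - x) = 1 - clamp x := by
  unfold clamp
  rcases le_total 1 x with h | h <;> rcases le_total x 0 with h' | h' <;>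
    simp [min_def, max_def] <;> split_ifs <;> linarith

/-- If `x` is a fixed point of a positive-step clamped gradient step with slope `d`,
then `x` maximizes the linear function `d * ·` on `[0,1]`. -/
lemma clamp_fix_max {x t d : ℝ} (hx : x ∈ Set.Icc (0:ℝ) 1) (ht : 0 < t)
    (hfix : clamp (x + t * d) = x) : ∀ x' ∈ Set.Icc (0:ℝ) 1, d * x' ≤ d * x := by
  intro x' hx'
  rcases lt_trichotomy d 0 with hd | hd | hd
  · have hx0 : x = 0 := by
      by_contra h0
      have hxpos : 0 < x := lt_of_le_of_ne hx.1 (Ne.symm h0)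
      have h1 : x + t * d < x := by nlinarith
      unfold clamp at hfix
      rw [min_eq_right (by linarith [hx.2])] at hfix
      rcases le_total 0 (x + t * d) with h2 | h2
      · rw [max_eq_right h2] at hfix; linarith
      · rw [max_eq_left h2] at hfix; linarith
    rw [hx0]; nlinarith [hx'.1]
  · simp [hd]
  · have hx1 : x = 1 := by
      by_contra h0
      have hxlt : x < 1 := lt_of_le_of_ne hx.2 h0
      have h1 : x < x + t * d := by nlinarith
      unfold clamp at hfix
      rcases le_total (x + t * d) 1 with h2 | h2
      · rw [min_eq_right h2, max_eq_right (by linarith [hx.1])] at hfix; linarith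
      · rw [min_eq_left h2, max_eq_right zero_le_one] at hfix; linarith
    rw [hx1]; nlinarith [hx'.2]

/-- A clamped gradient system with constant positive drive reaches 1 and stays there. -/
lemma reach_pos (c η : ℝ) (hη : 0 < η) (hc : 0 < c) (x : ℕ → ℝ)
    (hx : ∀ k, x k ∈ Set.Icc (0:ℝ) 1)
    (hstep : ∀ k, x (k + 1) = clamp (x k + η * c)) :
    ∃ N, ∀ k, N ≤ k → x k = 1 := by
  have hηc : 0 < η * c := mul_pos hη hc
  obtain ⟨n, hn⟩ := exists_nat_gt (1 / (η * c))
  have key : ∀ k : ℕ, min 1 (x 0 + k * (η * c)) ≤ x k := by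
    intro k
    induction k with
    | zero => simpa using min_le_right 1 (x 0)
    | succ k ih =>
      rw [hstep k]; unfold clamp
      rcases le_total 1 (x k + η * c) with h | h
      · calc min 1 (x 0 + (k + 1 : ℕ) * (η * c)) ≤ 1 := min_le_left _ _
          _ ≤ max 0 (min 1 (x k + η * c)) := by
              rw [min_eq_left h]; exact le_max_right _ _
      · have h3 : min 1 (x 0 + ((k : ℝ) + 1) * (η * c)) ≤ x k + η * c := by
          rcases le_total (x 0 + (k : ℝ) * (η * c)) 1 with h4 | h4
          · rw [min_eq_right h4] at ih
            calc min 1 (x 0 + ((k : ℝ) + 1) * (η * c)) ≤ x 0 + ((k : ℝ) + 1) * (η * c) :=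
                min_le_right _ _
              _ = x 0 + (k : ℝ) * (η * c) + η * c := by ring
              _ ≤ x k + η * c := by linarith
          · rw [min_eq_left h4] at ih; linarith
        calc min 1 (x 0 + ((k + 1 : ℕ) : ℝ) * (η * c))
            = min 1 (x 0 + ((k : ℝ) + 1) * (η * c)) := by push_cast; ring_nf
          _ ≤ x k + η * c := h3
          _ = min 1 (x k + η * c) := (min_eq_right h).symm
          _ ≤ max 0 (min 1 (x k + η * c)) := le_max_right _ _
  have hxn : x n = 1 := by
    have h2 : 1 < (n : ℝ) * (η * c) := by
      rw [div_lt_iff₀ hηc] at hn; linarith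
    have h1 : (1 : ℝ) ≤ x 0 + n * (η * c) := by linarith [(hx 0).1]
    have := key n
    rw [min_eq_left h1] at this
    exact le_antisymm (hx n).2 this
  refine ⟨n, ?_⟩
  intro k hk
  induction k, hk using Nat.le_induction with
  | base => exact hxn
  | succ k hk ih =>
    rw [hstep k, ih]
    unfold clamp
    rw [min_eq_left (by linarith), max_eq_right zero_le_one]

/-- A clamped gradient system with constant drive `c` freezes in finite time at a point
that is a fixed point of the clamped step for every positive step length. -/
lemma reach (c η : ℝ) (hη : 0 < η) (x : ℕ → ℝ)
    (hx : ∀ k, x k ∈ Set.Icc (0:ℝ) 1)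
    (hstep : ∀ k, x (k + 1) = clamp (x k + η * c)) :
    ∃ N x₀, (∀ k, N ≤ k → x k = x₀) ∧ ∀ t, 0 < t → clamp (x₀ + t * c) = x₀ := by
  rcases lt_trichotomy c 0 with hc | hc | hc
  · have hstep' : ∀ k, (1 - x (k + 1)) = clamp ((1 - x k) + η * (-c)) := by
      intro k
      rw [hstep k, show (1 - x k) + η * (-c) = 1 - (x k + η * c) by ring, clamp_one_sub]
    obtain ⟨N, hN⟩ := reach_pos (-c) η hη (by linarith) (fun k => 1 - x k)
      (fun k => ⟨show (0:ℝ) ≤ 1 - x k by linarith [(hx k).2],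
        show (1:ℝ) - x k ≤ 1 by linarith [(hx k).1]⟩) hstep'
    refine ⟨N, 0, ?_, ?_⟩
    · intro k hk; have := hN k hk; linarith
    · intro t ht
      rw [show (0:ℝ) + t * c = 1 - (1 + t * (-c)) by ring, clamp_one_sub]
      have h1 : clamp (1 + t * (-c)) = 1 := by
        unfold clamp
        rw [min_eq_left (by nlinarith), max_eq_right zero_le_one]
      rw [h1]; ring
  · have hconst0 : ∀ k, x k = x 0 := by
      intro k
      induction k with
      | zero => rfl
      | succ k ih => rw [hstep k, ih, hc, mul_zero, add_zero]; exact clamp_of_mem (hx 0)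
    exact ⟨0, x 0, fun k _ => hconst0 k,
      fun t ht => by rw [hc, mul_zero, add_zero]; exact clamp_of_mem (hx 0)⟩
  · obtain ⟨N, hN⟩ := reach_pos c η hη hc x hx hstep
    refine ⟨N, 1, hN, ?_⟩
    intro t ht
    unfold clamp
    rw [min_eq_left (by nlinarith), max_eq_right zero_le_one]

/-- Abstract termination lemma: if the first agent's drive is a constant `c`,
the GA-SPP predictions eventually coincide with the current strategies. -/
lemma gaspp_terminates (c : ℝ) (fb : ℝ → ℝ) (η : ℝ) (hη : 0 < η)
    (γ a b abar bbar : ℕ → ℝ) (hγ : ∀ k, 0 < γ k)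
    (ha : ∀ k, a k ∈ Set.Icc (0:ℝ) 1) (hb : ∀ k, b k ∈ Set.Icc (0:ℝ) 1)
    (habar : ∀ k, abar (k + 1) = clamp (a k + γ k * c))
    (hbbar : ∀ k, bbar (k + 1) = clamp (b k + γ k * fb (a k)))
    (hstepa : ∀ k, ¬(abar (k + 1) = a k ∧ bbar (k + 1) = b k) →
      a (k + 1) = clamp (a k + η * c))
    (hstepb : ∀ k, ¬(abar (k + 1) = a k ∧ bbar (k + 1) = b k) →
      b (k + 1) = clamp (b k + η * fb (abar (k + 1)))) :
    ∃ K, abar (K + 1) = a K ∧ bbar (K + 1) = b K := by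
  by_contra h
  have hnt : ∀ k, ¬(abar (k + 1) = a k ∧ bbar (k + 1) = b k) := by
    intro k hkk; exact h ⟨k, hkk⟩
  obtain ⟨N, a₀, hafix, hafp⟩ := reach c η hη a ha (fun k => hstepa k (hnt k))
  have habar' : ∀ k, N ≤ k → abar (k + 1) = a₀ := by
    intro k hk
    rw [habar k, hafix k hk]
    exact hafp (γ k) (hγ k)
  have hstepb' : ∀ k : ℕ, b (N + (k + 1)) = clamp (b (N + k) + η * fb a₀) := by
    intro k
    have := hstepb (N + k) (hnt (N + k))
    rwa [habar' (N + k) (Nat.le_add_right _ _)] at this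
  obtain ⟨M, b₀, hbfix, hbfp⟩ := reach (fb a₀) η hη (fun k => b (N + k))
    (fun k => hb _) hstepb'
  apply hnt (N + M)
  have hbNM : b (N + M) = b₀ := hbfix M le_rfl
  constructor
  · rw [habar' (N + M) (Nat.le_add_right _ _), hafix (N + M) (Nat.le_add_right _ _)]
  · rw [hbbar (N + M), hafix (N + M) (Nat.le_add_right _ _), hbNM]
    exact hbfp (γ (N + M)) (hγ (N + M))

/-- Lemma 2: in a 2×2 game with u_r u_c = 0, if both agents
follow GA-SPP (Conditions 1–3), then from any initial strategy pair the
strategies become constant after finitely many steps, at a Nash equilibrium. -/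
theorem stmt8 (R C : Matrix (Fin 2) (Fin 2) ℝ)
    (hU : ur2 R * uc2 C = 0)
    (γ₀ η : ℝ) (hcond : Conds2 R C γ₀ η)
    (γ a b abar bbar : ℕ → ℝ)
    (hγ₀ : γ 0 = γ₀) (ha₀ : a 0 ∈ Set.Icc (0 : ℝ) 1) (hb₀ : b 0 ∈ Set.Icc (0 : ℝ) 1)
    (hrun : GASPP2Run R C η γ a b abar bbar) :
    ∃ K : ℕ, (∀ k : ℕ, K ≤ k → a k = a K ∧ b k = b K) ∧ IsNash2 R C (a K) (b K) := by
  obtain ⟨hγ0pos, hηpos, -, -, -⟩ := hcond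
  -- the prediction lengths stay positive
  have hγ : ∀ k, 0 < γ k := by
    intro k
    induction k with
    | zero => rw [hγ₀]; exact hγ0pos
    | succ k ih =>
      obtain ⟨h1, h2, h3, h4⟩ := hrun k
      by_cases ht : abar (k + 1) = a k ∧ bbar (k + 1) = b k
      · rw [(h3 ht).2.2]; exact ih
      · obtain ⟨ha', hb', hμ, hγ'⟩ := h4 ht
        by_cases hs : a (k + 1) = a k ∧ b (k + 1) = b k
        · obtain ⟨μ, hμ0, _, hγeq⟩ := hμ hs
          rw [hγeq]; exact mul_pos hμ0 ih
        · rw [hγ' hs]; exact ih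
  -- the strategies stay in [0,1]
  have hmem : ∀ k, a k ∈ Set.Icc (0:ℝ) 1 ∧ b k ∈ Set.Icc (0:ℝ) 1 := by
    intro k
    induction k with
    | zero => exact ⟨ha₀, hb₀⟩
    | succ k ih =>
      obtain ⟨h1, h2, h3, h4⟩ := hrun k
      by_cases ht : abar (k + 1) = a k ∧ bbar (k + 1) = b k
      · obtain ⟨e1, e2, -⟩ := h3 ht
        rw [e1, e2]; exact ih
      · obtain ⟨e1, e2, -, -⟩ := h4 ht
        rw [e1, e2]; exact ⟨clamp_mem _, clamp_mem _⟩
  -- termination in finite time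
  have hterm : ∃ K, abar (K + 1) = a K ∧ bbar (K + 1) = b K := by
    rcases mul_eq_zero.mp hU with h0 | h0
    · exact gaspp_terminates (br2 R) (dVc2 C) η hηpos γ a b abar bbar hγ
        (fun k => (hmem k).1) (fun k => (hmem k).2)
        (fun k => by
          have := (hrun k).1
          rwa [show dVr2 R (b k) = br2 R from by rw [dVr2, h0]; ring] at this)
        (fun k => (hrun k).2.1)
        (fun k hk => by
          have := ((hrun k).2.2.2 hk).1
          rwa [show dVr2 R (bbar (k + 1)) = br2 R from by rw [dVr2, h0]; ring] at this)
        (fun k hk => ((hrun k).2.2.2 hk).2.1)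
    · obtain ⟨K, h1, h2⟩ := gaspp_terminates (bc2 C) (dVr2 R) η hηpos γ b a bbar abar hγ
        (fun k => (hmem k).2) (fun k => (hmem k).1)
        (fun k => by
          have := (hrun k).2.1
          rwa [show dVc2 C (a k) = bc2 C from by rw [dVc2, h0]; ring] at this)
        (fun k => (hrun k).1)
        (fun k hk => by
          have hk' : ¬(abar (k + 1) = a k ∧ bbar (k + 1) = b k) := fun hh => hk ⟨hh.2, hh.1⟩
          have := ((hrun k).2.2.2 hk').2.1
          rwa [show dVc2 C (abar (k + 1)) = bc2 C from by rw [dVc2, h0]; ring] at this)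
        (fun k hk => by
          have hk' : ¬(abar (k + 1) = a k ∧ bbar (k + 1) = b k) := fun hh => hk ⟨hh.2, hh.1⟩
          exact ((hrun k).2.2.2 hk').1)
      exact ⟨K, h2, h1⟩
  obtain ⟨K, hKa, hKb⟩ := hterm
  refine ⟨K, ?_, ?_⟩
  · -- constancy from time K on
    have hconst : ∀ k, K ≤ k → a k = a K ∧ b k = b K ∧ γ k = γ K := by
      intro k hk
      induction k, hk using Nat.le_induction with
      | base => exact ⟨rfl, rfl, rfl⟩
      | succ k hk ih =>
        obtain ⟨e1, e2, e3⟩ := ih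
        have hbar : abar (k + 1) = a k ∧ bbar (k + 1) = b k := by
          constructor
          · rw [(hrun k).1, e1, e2, e3, ← (hrun K).1, hKa]
          · rw [(hrun k).2.1, e1, e2, e3, ← (hrun K).2.1, hKb]
        obtain ⟨f1, f2, f3⟩ := (hrun k).2.2.1 hbar
        exact ⟨f1.trans e1, f2.trans e2, f3.trans e3⟩
    exact fun k hk => ⟨(hconst k hk).1, (hconst k hk).2.1⟩
  · -- the frozen point is a Nash equilibrium
    have haK := (hmem K).1
    have hbK := (hmem K).2
    have hfixa : clamp (a K + γ K * dVr2 R (b K)) = a K := by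
      rw [← (hrun K).1]; exact hKa
    have hfixb : clamp (b K + γ K * dVc2 C (a K)) = b K := by
      rw [← (hrun K).2.1]; exact hKb
    refine ⟨haK, hbK, ?_, ?_⟩
    · intro α' hα'
      have hmax := clamp_fix_max haK (hγ K) hfixa α' hα'
      have hid : ∀ α : ℝ, Vr2 R α (b K) =
          Vr2 R (a K) (b K) + dVr2 R (b K) * (α - a K) := by
        intro α; unfold Vr2 dVr2 ur2 br2; ring
      rw [hid α', mul_sub]
      linarith
    · intro β' hβ'
      have hmax := clamp_fix_max hbK (hγ K) hfixb β' hβ'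
      have hid : ∀ β : ℝ, Vc2 C (a K) β =
          Vc2 C (a K) (b K) + dVc2 C (a K) * (β - b K) := by
        intro β; unfold Vc2 dVc2 uc2 bc2; ring
      rw [hid β', mul_sub]
      linarith
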